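/- arXiv:2502.04811 — 5 statements merged into one kernel-verified Lean document; each statement's English description precedes it below -/
import Mathlib

section
/- The limit as ℓ → ∞ of 1 / (1 − ((ℓ+1)/⌈e·ℓ⌉) · ∑_{j=ℓ+2}^{⌈e·ℓ⌉} 1/j) equals e/(e−1). -/
open Filter Real

open Finset in

lemma telesc (g : ℕ → ℝ) {a n : ℕ} (h : a ≤ n) :
    ∑ j ∈ Finset.Ico a n, (g (j+1) - g j) = g n - g a := by
  rw [Finset.sum_Ico_eq_sub _ h, Finset.sum_range_sub, Finset.sum_range_sub]
  ring

lemma lin_ratio (p q s t : ℝ) (hs : s ≠ 0) :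
    Tendsto (fun ℓ : ℕ => (p*ℓ+q)/(s*ℓ+t)) atTop (nhds (p/s)) := by
  have h0 : Tendsto (fun ℓ : ℕ => ((ℓ:ℝ))⁻¹) atTop (nhds 0) :=
    tendsto_inv_atTop_zero.comp tendsto_natCast_atTop_atTop
  have h1 : Tendsto (fun ℓ : ℕ => (p + q*((ℓ:ℝ))⁻¹)/(s + t*((ℓ:ℝ))⁻¹)) atTop
      (nhds ((p + q*0)/(s + t*0))) := by
    exact Tendsto.div (tendsto_const_nhds.add (tendsto_const_nhds.mul h0))
      (tendsto_const_nhds.add (tendsto_const_nhds.mul h0)) (by simpa using hs)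
  simp only [mul_zero, add_zero] at h1
  refine h1.congr' ?_
  filter_upwards [eventually_ge_atTop 1] with ℓ hℓ
  have hℓ' : (ℓ:ℝ) ≠ 0 := by positivity
  rw [show p*ℓ+q = ℓ*(p + q*((ℓ:ℝ))⁻¹) by field_simp,
      show s*ℓ+t = ℓ*(s + t*((ℓ:ℝ))⁻¹) by field_simp,
      mul_div_mul_left _ _ hℓ']

lemma sum_ub {a b : ℕ} (ha : 2 ≤ a) (hab : a ≤ b + 1) :
    ∑ j ∈ Finset.Icc a b, (1:ℝ)/j ≤ Real.log b - Real.log (a-1 : ℕ) := by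
  have key : ∑ j ∈ Finset.Ico a (b+1), (1:ℝ)/j ≤
      ∑ j ∈ Finset.Ico a (b+1), (Real.log ((j+1)-1 : ℕ) - Real.log (j-1 : ℕ)) := by
    apply Finset.sum_le_sum
    intro j hj
    have hj2 : 2 ≤ j := ha.trans (Finset.mem_Ico.mp hj).1
    have hjpos : (0:ℝ) < j := by positivity
    have hcast : ((j-1 : ℕ) : ℝ) = (j:ℝ) - 1 := by
      push_cast [Nat.cast_sub (by omega : 1 ≤ j)]; ring
    have hj2' : (2:ℝ) ≤ j := by exact_mod_cast hj2
    have h1 : (0:ℝ) < ((j:ℝ)-1)/j := by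
      apply div_pos _ hjpos
      linarith
    have h2 := Real.log_le_sub_one_of_pos h1
    rw [Real.log_div (by linarith) (ne_of_gt hjpos)] at h2
    have hsimp : ((j:ℝ)-1)/j - 1 = -(1/j) := by field_simp; ring
    rw [hsimp] at h2
    rw [show ((j+1)-1 : ℕ) = j by omega, hcast]
    linarith
  rw [telesc (fun j => Real.log (j-1 : ℕ)) hab] at key
  rw [show (b+1)-1 = b by omega] at key
  rw [← Finset.Ico_add_one_right_eq_Icc] at *
  exact key

lemma sum_lb {a b : ℕ} (ha : 1 ≤ a) (hab : a ≤ b + 1) :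
    Real.log (b+1 : ℕ) - Real.log a ≤ ∑ j ∈ Finset.Icc a b, (1:ℝ)/j := by
  have key : ∑ j ∈ Finset.Ico a (b+1), (Real.log (j+1 : ℕ) - Real.log (j : ℕ)) ≤
      ∑ j ∈ Finset.Ico a (b+1), (1:ℝ)/j := by
    apply Finset.sum_le_sum
    intro j hj
    have hj1 : 1 ≤ j := ha.trans (Finset.mem_Ico.mp hj).1
    have hjpos : (0:ℝ) < j := by exact_mod_cast hj1
    have h1 : (0:ℝ) < ((j:ℝ)+1)/j := by positivity
    have h2 := Real.log_le_sub_one_of_pos h1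
    rw [Real.log_div (by positivity) (ne_of_gt hjpos)] at h2
    have hsimp : ((j:ℝ)+1)/j - 1 = 1/j := by field_simp; ring
    rw [hsimp] at h2
    push_cast
    linarith
  rw [telesc (fun j => Real.log (j : ℕ)) hab] at key
  rw [← Finset.Ico_add_one_right_eq_Icc]
  exact key


/-- The limit as ℓ → ∞ of `1 / (1 − ((ℓ+1)/⌈e·ℓ⌉) · ∑_{j=ℓ+2}^{⌈e·ℓ⌉} 1/j)`
equals `e/(e−1)`. -/
theorem tendsto_pos_ratio_exp :
    Tendsto (fun ℓ : ℕ =>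
        1 / (1 - ((ℓ : ℝ) + 1) / (⌈Real.exp 1 * ℓ⌉₊ : ℝ) *
          ∑ j ∈ Finset.Icc (ℓ + 2) ⌈Real.exp 1 * ℓ⌉₊, (1 : ℝ) / j))
      atTop (nhds (Real.exp 1 / (Real.exp 1 - 1))) := by
  set E := Real.exp 1 with hEdef
  have he9 : (2.7182818283 : ℝ) < E := Real.exp_one_gt_d9
  have hE1 : (1:ℝ) < E := by linarith
  have hE0 : (0:ℝ) < E := by linarith
  set M : ℕ → ℕ := fun ℓ => ⌈E * ℓ⌉₊ with hMdef
  have hMlb : ∀ ℓ : ℕ, E * ℓ ≤ (M ℓ : ℝ) := fun ℓ => Nat.le_ceil _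
  have hMub : ∀ ℓ : ℕ, (M ℓ : ℝ) < E * ℓ + 1 := fun ℓ => Nat.ceil_lt_add_one (by positivity)
  -- M ℓ positive eventually
  have hMpos : ∀ ℓ : ℕ, 1 ≤ ℓ → (0:ℝ) < (M ℓ : ℝ) := by
    intro ℓ hℓ
    have : (1:ℝ) ≤ ℓ := by exact_mod_cast hℓ
    have := hMlb ℓ
    nlinarith
  have hMge : ∀ ℓ : ℕ, 2 ≤ ℓ → ℓ + 2 ≤ M ℓ := by
    intro ℓ hℓ
    have h2 : (2:ℝ) ≤ ℓ := by exact_mod_cast hℓ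
    have := hMlb ℓ
    have : ((ℓ:ℝ) + 2) ≤ (M ℓ : ℝ) := by nlinarith
    exact_mod_cast this
  -- q1 = M/(ℓ+1) → E
  have hq1 : Tendsto (fun ℓ : ℕ => (M ℓ : ℝ)/((ℓ:ℝ)+1)) atTop (nhds E) := by
    have hlo : Tendsto (fun ℓ : ℕ => (E*ℓ+0)/((1:ℝ)*ℓ+1)) atTop (nhds (E/1)) :=
      lin_ratio E 0 1 1 one_ne_zero
    have hhi : Tendsto (fun ℓ : ℕ => (E*ℓ+1)/((1:ℝ)*ℓ+1)) atTop (nhds (E/1)) :=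
      lin_ratio E 1 1 1 one_ne_zero
    simp only [div_one, add_zero, one_mul] at hlo hhi
    refine tendsto_of_tendsto_of_tendsto_of_le_of_le' hlo hhi ?_ ?_
    · filter_upwards [eventually_ge_atTop 1] with ℓ _
      exact div_le_div_of_nonneg_right (hMlb ℓ) (by positivity) |>.trans_eq rfl
    · filter_upwards [eventually_ge_atTop 1] with ℓ _
      exact div_le_div_of_nonneg_right (le_of_lt (hMub ℓ)) (by positivity)
  -- r = (ℓ+1)/M → E⁻¹
  have hr : Tendsto (fun ℓ : ℕ => ((ℓ:ℝ)+1)/(M ℓ : ℝ)) atTop (nhds E⁻¹) := by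
    have := hq1.inv₀ (ne_of_gt hE0)
    simpa [inv_div] using this
  -- log M - log(ℓ+1) → 1
  have hU : Tendsto (fun ℓ : ℕ => Real.log (M ℓ : ℝ) - Real.log ((ℓ:ℝ)+1)) atTop (nhds 1) := by
    have hc := (Real.continuousAt_log (ne_of_gt hE0)).tendsto.comp hq1
    rw [hEdef, Real.log_exp] at hc
    refine hc.congr' ?_
    filter_upwards [eventually_ge_atTop 1] with ℓ hℓ
    simp only [Function.comp]
    rw [Real.log_div (ne_of_gt (hMpos ℓ hℓ)) (by positivity)]
  -- q2 = (M+1)/(ℓ+2) → E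
  have hq2 : Tendsto (fun ℓ : ℕ => ((M ℓ : ℝ)+1)/((ℓ:ℝ)+2)) atTop (nhds E) := by
    have hlo : Tendsto (fun ℓ : ℕ => (E*ℓ+1)/((1:ℝ)*ℓ+2)) atTop (nhds (E/1)) :=
      lin_ratio E 1 1 2 one_ne_zero
    have hhi : Tendsto (fun ℓ : ℕ => (E*ℓ+2)/((1:ℝ)*ℓ+2)) atTop (nhds (E/1)) :=
      lin_ratio E 2 1 2 one_ne_zero
    simp only [div_one, one_mul] at hlo hhi
    refine tendsto_of_tendsto_of_tendsto_of_le_of_le' hlo hhi ?_ ?_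
    · filter_upwards [eventually_ge_atTop 1] with ℓ _
      have := hMlb ℓ
      apply div_le_div_of_nonneg_right (by linarith) (by positivity)
    · filter_upwards [eventually_ge_atTop 1] with ℓ _
      have := hMub ℓ
      apply div_le_div_of_nonneg_right (by linarith) (by positivity)
  -- log(M+1) - log(ℓ+2) → 1
  have hL : Tendsto (fun ℓ : ℕ => Real.log ((M ℓ : ℝ)+1) - Real.log ((ℓ:ℝ)+2)) atTop (nhds 1) := by
    have hc := (Real.continuousAt_log (ne_of_gt hE0)).tendsto.comp hq2
    rw [hEdef, Real.log_exp] at hc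
    refine hc.congr' ?_
    filter_upwards [eventually_ge_atTop 1] with ℓ hℓ
    simp only [Function.comp]
    have := hMpos ℓ hℓ
    rw [Real.log_div (by linarith) (by positivity)]
  -- products
  have hrU : Tendsto (fun ℓ : ℕ => ((ℓ:ℝ)+1)/(M ℓ : ℝ) *
      (Real.log (M ℓ : ℝ) - Real.log ((ℓ:ℝ)+1))) atTop (nhds E⁻¹) := by
    simpa using hr.mul hU
  have hrL : Tendsto (fun ℓ : ℕ => ((ℓ:ℝ)+1)/(M ℓ : ℝ) *
      (Real.log ((M ℓ : ℝ)+1) - Real.log ((ℓ:ℝ)+2))) atTop (nhds E⁻¹) := by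
    simpa using hr.mul hL
  -- the main inner quantity
  have hg : Tendsto (fun ℓ : ℕ => ((ℓ:ℝ)+1)/(M ℓ : ℝ) *
      ∑ j ∈ Finset.Icc (ℓ + 2) (M ℓ), (1:ℝ)/j) atTop (nhds E⁻¹) := by
    refine tendsto_of_tendsto_of_tendsto_of_le_of_le' hrL hrU ?_ ?_
    · filter_upwards [eventually_ge_atTop 2] with ℓ hℓ
      have hrnn : (0:ℝ) ≤ ((ℓ:ℝ)+1)/(M ℓ : ℝ) := by positivity
      apply mul_le_mul_of_nonneg_left _ hrnn
      have := sum_lb (a := ℓ+2) (b := M ℓ) (by omega) (by have := hMge ℓ hℓ; omega)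
      calc Real.log ((M ℓ : ℝ)+1) - Real.log ((ℓ:ℝ)+2)
          = Real.log ((M ℓ)+1 : ℕ) - Real.log ((ℓ+2 : ℕ) : ℝ) := by push_cast; ring_nf
        _ ≤ _ := this
    · filter_upwards [eventually_ge_atTop 2] with ℓ hℓ
      have hrnn : (0:ℝ) ≤ ((ℓ:ℝ)+1)/(M ℓ : ℝ) := by positivity
      apply mul_le_mul_of_nonneg_left _ hrnn
      have := sum_ub (a := ℓ+2) (b := M ℓ) (by omega) (by have := hMge ℓ hℓ; omega)
      calc ∑ j ∈ Finset.Icc (ℓ + 2) (M ℓ), (1:ℝ)/j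
          ≤ Real.log (M ℓ : ℕ) - Real.log ((ℓ+2)-1 : ℕ) := this
        _ = Real.log (M ℓ : ℝ) - Real.log ((ℓ:ℝ)+1) := by
            rw [show (ℓ+2)-1 = ℓ+1 by omega]; push_cast; ring_nf
  -- conclude
  have hne : (1:ℝ) - E⁻¹ ≠ 0 := by
    have h1 : E⁻¹ < 1 := inv_lt_one_of_one_lt₀ hE1
    linarith
  have hden : Tendsto (fun ℓ : ℕ => 1 - ((ℓ:ℝ)+1)/(M ℓ : ℝ) *
      ∑ j ∈ Finset.Icc (ℓ + 2) (M ℓ), (1:ℝ)/j) atTop (nhds (1 - E⁻¹)) :=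
    tendsto_const_nhds.sub hg
  have hfin := hden.inv₀ hne
  have hval : (1 - E⁻¹)⁻¹ = E / (E - 1) := by
    rw [show (1:ℝ) - E⁻¹ = (E-1)/E by field_simp, inv_div]
  rw [hval] at hfin
  simpa [one_div] using hfin
end

section
/- Let k ≥ 1 and consider a single layer with edges having transit times τ₁ ≤ τ₂ ≤ … ≤ τ_k and unit capacity, receiving at most k arrivals at node v at every integer time. If at every time each arriving player is assigned to an edge of currently minimal latency (transit time plus current queue waiting), then no player ever experiences latency exceeding τ_k. -/
/-- Single-layer discrete queueing model with `k` unit-capacity edges with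
nondecreasing transit times `τ`, at most `k` arrivals per integer time step,
each arriving player assigned to an edge of currently minimal latency.
Here `q t e` is the queue length of edge `e` just before the arrivals at time
`t`, and `r t e` is the number of players assigned to edge `e` at time `t`;
each edge with a nonempty queue releases one player per time step. The latency
of the last player assigned to `e` at time `t` is `τ e + q t e + r t e − 1`.
Conclusion: no player ever experiences latency exceeding `τ_k`, the largest
transit time. -/
theorem equilibrium_latency_le_max (k : ℕ) (hk : 1 ≤ k)
    (τ : Fin k → ℕ) (hτ : Monotone τ)
    (q r : ℕ → Fin k → ℕ)
    (hq0 : ∀ e, q 0 e = 0)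
    (hdyn : ∀ t e, q (t + 1) e = q t e + r t e - min (q t e + r t e) 1)
    (hinflow : ∀ t, ∑ e, r t e ≤ k)
    (hgreedy : ∀ t e e', 0 < r t e →
      τ e + q t e + r t e ≤ τ e' + q t e' + r t e' + 1) :
    ∀ t e, 0 < r t e →
      τ e + q t e + r t e ≤ τ ⟨k - 1, Nat.sub_lt hk Nat.one_pos⟩ + 1 := by
  set m : Fin k := ⟨k - 1, Nat.sub_lt hk Nat.one_pos⟩ with hm
  have hτe : ∀ e : Fin k, τ e ≤ τ m := by
    intro e
    exact hτ (show e ≤ m by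
      simp only [Fin.le_def, hm]
      omega)
  have key : ∀ t, ∀ e, τ e + q t e ≤ τ m := by
    intro t
    induction t with
    | zero => intro e; simpa [hq0] using hτe e
    | succ t ih =>
      have goal_t : ∀ e, 0 < r t e → τ e + q t e + r t e ≤ τ m + 1 := by
        intro e hre
        by_contra hbad
        push_neg at hbad
        have h2 : 2 ≤ r t e := by have := ih e; omega
        have h1 : ∀ e', 1 ≤ r t e' := by
          intro e'
          have hg := hgreedy t e e' hre
          have := ih e'
          omega
        have hlt : ∑ _e' : Fin k, (1 : ℕ) < ∑ e', r t e' :=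
          Finset.sum_lt_sum (fun i _ => h1 i) ⟨e, Finset.mem_univ e, by omega⟩
        have hk' : (k : ℕ) < ∑ e', r t e' := by simpa using hlt
        have := hinflow t
        omega
      intro e
      have hd := hdyn t e
      rcases Nat.eq_zero_or_pos (r t e) with h0 | hpos
      · have := ih e; omega
      · have := goal_t e hpos; omega
  intro t e hre
  by_contra hbad
  push_neg at hbad
  have h2 : 2 ≤ r t e := by have := key t e; omega
  have h1 : ∀ e', 1 ≤ r t e' := by
    intro e'
    have hg := hgreedy t e e' hre
    have := key t e'
    omega
  have hlt : ∑ _e' : Fin k, (1 : ℕ) < ∑ e', r t e' :=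
    Finset.sum_lt_sum (fun i _ => h1 i) ⟨e, Finset.mem_univ e, by omega⟩
  have hk' : (k : ℕ) < ∑ e', r t e' := by simpa using hlt
  have := hinflow t
  omega
end

section
/- Consider a linear multigraph layer structure where in layer j (for 1 ≤ j ≤ k−ℓ) there are k−j+1 'fast' edges of transit time 1 with unit capacity. Suppose n packets are all released at node v₀ at time 0, and at each node, packets split evenly among the fast edges of the next layer (FIFO, one packet per edge per time step). Prove by induction: for every 1 ≤ j ≤ k−ℓ, exactly k−j+1 packets arrive at node v_j at each integer time t with j ≤ t ≤ n/(k−j+1) + j − 1, provided (k−j+1) divides n for all such j. -/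
lemma shrinking_key (N m c a : ℕ) (hm : 0 < m) (hcm : m ≤ c) (hdvd : m ∣ N)
    (F g : ℕ → ℕ) (hF : ∀ t, F t = min N (c * (t + 1 - a)))
    (hg0 : g 0 = 0)
    (hgdyn : ∀ t, g (t + 1) = min m (F t - ∑ s ∈ Finset.range t, g (s + 1))) :
    (∀ t, g t = if a + 1 ≤ t ∧ t ≤ N / m + a then m else 0) ∧
    (∀ t, (∑ s ∈ Finset.range (t + 1), g s) = min N (m * (t + 1 - (a + 1)))) := by
  have hmulN : ∀ x : ℕ, m * x < N → m * x + m ≤ N := by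
    intro x hx
    obtain ⟨q, rfl⟩ := hdvd
    have hxq : x < q := by
      by_contra h
      push_neg at h
      exact absurd (Nat.mul_le_mul_left m h) (by omega)
    have h2 : m * (x + 1) ≤ m * q := Nat.mul_le_mul_left m hxq
    have h3 : m * (x + 1) = m * x + m := by ring
    omega
  have hS : ∀ t, (∑ s ∈ Finset.range t, g (s + 1)) = min N (m * (t - a)) := by
    intro t
    induction t with
    | zero => simp
    | succ t ih =>
      rw [Finset.sum_range_succ, ih, hgdyn t, ih, hF t]
      rcases Nat.lt_or_ge t a with h | h
      · have h1 : t - a = 0 := by omega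
        have h2 : t + 1 - a = 0 := by omega
        rw [h1, h2]
        simp
      · have e1 : t + 1 - a = (t - a) + 1 := by omega
        rw [e1]
        have f1 : m * (t - a + 1) = m * (t - a) + m := by ring
        have f2 : m * (t - a + 1) ≤ c * (t - a + 1) := Nat.mul_le_mul_right _ hcm
        have f3 := hmulN (t - a)
        omega
  have hpt : ∀ t, g t = if a + 1 ≤ t ∧ t ≤ N / m + a then m else 0 := by
    intro t
    cases t with
    | zero => simp [hg0]
    | succ t =>
      have e1 : g (t + 1) = min N (m * (t + 1 - a)) - min N (m * (t - a)) := by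
        have h2 := hS (t + 1)
        rw [Finset.sum_range_succ, hS t] at h2
        omega
      rw [e1]
      have hd : t + 1 - a ≤ N / m ↔ m * (t + 1 - a) ≤ N := by
        rw [Nat.le_div_iff_mul_le hm, Nat.mul_comm]
      rcases Nat.lt_or_ge t a with h | h
      · have h1 : t - a = 0 := by omega
        have h2 : t + 1 - a = 0 := by omega
        rw [h1, h2, if_neg (by omega : ¬(a + 1 ≤ t + 1 ∧ t + 1 ≤ N / m + a))]
        simp
      · have e2 : t + 1 - a = (t - a) + 1 := by omega
        have f1 : m * (t + 1 - a) = m * (t - a) + m := by rw [e2]; ring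
        have f3 := hmulN (t - a)
        by_cases hcond : a + 1 ≤ t + 1 ∧ t + 1 ≤ N / m + a
        · rw [if_pos hcond]
          omega
        · rw [if_neg hcond]
          omega
  refine ⟨hpt, fun t => ?_⟩
  rw [Finset.sum_range_succ', hS t, hg0]
  have e : t + 1 - (a + 1) = t - a := by omega
  rw [e]
  omega


/-- Shrinking chain of parallel links: `arr j t` is the number of packets
arriving at node `v_j` at time `t`. All `n` packets are released at `v₀` at
time `0`; layer `j+1` (edges from `v_j` to `v_{j+1}`) consists of `k−j`
parallel FIFO unit-capacity edges of transit time `1`, each releasing one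
packet per time step, so the number of packets arriving at `v_{j+1}` at time
`t+1` equals the minimum of `k−j` and the current backlog at `v_j`.
If `(k−j+1) ∣ n` for all `1 ≤ j ≤ k−ℓ`, then exactly `k−j+1` packets arrive at
`v_j` at each time `t` with `j ≤ t ≤ n/(k−j+1) + j − 1`. -/
theorem shrinking_chain_arrivals (n k ℓ : ℕ) (hn : 0 < n) (hk : 0 < k)
    (hℓ : ℓ < k)
    (arr : ℕ → ℕ → ℕ)
    (h0 : ∀ t, arr 0 t = if t = 0 then n else 0)
    (hinit : ∀ j, j + 1 ≤ k - ℓ → arr (j + 1) 0 = 0)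
    (hdyn : ∀ j, j + 1 ≤ k - ℓ → ∀ t,
      arr (j + 1) (t + 1) =
        min (k - j)
          ((∑ s ∈ Finset.range (t + 1), arr j s) -
            (∑ s ∈ Finset.range t, arr (j + 1) (s + 1))))
    (hdvd : ∀ j, 1 ≤ j → j ≤ k - ℓ → (k - j + 1) ∣ n) :
    ∀ j, 1 ≤ j → j ≤ k - ℓ → ∀ t, j ≤ t → t ≤ n / (k - j + 1) + j - 1 →
      arr j t = k - j + 1 := by
  have hk1 : 1 ≤ k - ℓ := by omega
  have main : ∀ j, 1 ≤ j → j ≤ k - ℓ →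
      (∀ t, arr j t = if j ≤ t ∧ t ≤ n / (k - j + 1) + j - 1 then k - j + 1 else 0) ∧
      (∀ t, (∑ s ∈ Finset.range (t + 1), arr j s) = min n ((k - j + 1) * (t + 1 - j))) := by
    intro j
    induction j with
    | zero => omega
    | succ j ih =>
      intro _ hj
      rcases Nat.eq_zero_or_pos j with rfl | hjpos
      · -- base case j = 1
        have hkk : k - 1 + 1 = k := by omega
        have hkn : k ∣ n := by have := hdvd 1 le_rfl hk1; rwa [hkk] at this
        have hsum0 : ∀ t, (∑ s ∈ Finset.range (t + 1), arr 0 s) = n := by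
          intro t
          induction t with
          | zero => simp [h0 0]
          | succ t ih0 => rw [Finset.sum_range_succ, ih0, h0 (t + 1)]; simp
        have hkey := shrinking_key n k n 0 hk (Nat.le_of_dvd hn hkn) hkn
          (fun t => ∑ s ∈ Finset.range (t + 1), arr 0 s) (arr 1)
          (fun t => by
            simp only [hsum0, Nat.sub_zero]
            have : n ≤ n * (t + 1) := Nat.le_mul_of_pos_right n (Nat.succ_pos t)
            omega)
          (hinit 0 hk1)
          (fun t => by simpa using hdyn 0 hk1 t)
        rw [hkk]
        constructor
        · intro t
          rw [hkey.1 t]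
          have e : ∀ D : ℕ, D + 0 = D + 1 - 1 := fun D => by omega
          rw [e (n / k)]
        · intro t
          exact hkey.2 t
      · -- inductive step: j ≥ 1, producing level j + 1
        have ihj := ih hjpos (by omega)
        have hjk : j + 1 ≤ k := by omega
        have e : k - (j + 1) + 1 = k - j := by omega
        have hdvd' : (k - j) ∣ n := by
          have := hdvd (j + 1) (by omega) hj
          rwa [e] at this
        have hkey := shrinking_key n (k - j) (k - j + 1) j (by omega) (by omega) hdvd'
          (fun t => ∑ s ∈ Finset.range (t + 1), arr j s) (arr (j + 1))
          (fun t => ihj.2 t)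
          (hinit j hj)
          (fun t => hdyn j hj t)
        rw [e]
        constructor
        · intro t
          rw [hkey.1 t]
          have e2 : ∀ D : ℕ, D + j = D + (j + 1) - 1 := fun D => by omega
          rw [e2 (n / (k - j))]
        · intro t
          exact hkey.2 t
  intro j hj1 hj2 t ht1 ht2
  rw [(main j hj1 hj2).1 t, if_pos ⟨ht1, ht2⟩]
end

section
/- In the shrinking-chain instance, the last (n-th) packet arrives at node v_j at time n/(k−j+1) + j − 1 for each 1 ≤ j ≤ k−ℓ; in particular the equilibrium completion time is C = (k−ℓ−1) + n/(ℓ+1). -/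
lemma indSum (c a b t : ℕ) :
    ∑ s ∈ Finset.range t, (if a ≤ s ∧ s < b then c else 0)
      = c * (min t b - min t a) := by
  induction t with
  | zero => simp
  | succ t ih =>
    rw [Finset.sum_range_succ, ih]
    by_cases h : a ≤ t ∧ t < b
    · rw [if_pos h]
      have e : min (t+1) b - min (t+1) a = (min t b - min t a) + 1 := by omega
      rw [e, Nat.mul_succ]
    · rw [if_neg h]
      have e : min (t+1) b - min (t+1) a = min t b - min t a := by omega
      rw [e, add_zero]

lemma queue (c m j : ℕ) (hc : 0 < c) (A f : ℕ → ℕ)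
    (hA0 : ∀ T, T ≤ j → A T = 0)
    (hAub : ∀ T, A T ≤ c * m)
    (hAlb : ∀ T, min (c * (T - j)) (c * m) ≤ A T)
    (hf0 : f 0 = 0)
    (hdynf : ∀ t, f (t+1) = min c (A (t+1) - ∑ s ∈ Finset.range t, f (s+1))) :
    ∀ t, f t = if j + 1 ≤ t ∧ t < j + 1 + m then c else 0 := by
  intro t
  induction t using Nat.strong_induction_on with
  | _ t ih =>
    match t with
    | 0 =>
      rw [hf0, if_neg (by omega)]
    | t + 1 =>
      have hD : ∑ s ∈ Finset.range t, f (s+1) = c * (min t (j+m) - min t j) := by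
        have hcongr : ∀ s ∈ Finset.range t,
            f (s+1) = if j ≤ s ∧ s < j + m then c else 0 := by
          intro s hs
          simp only [Finset.mem_range] at hs
          rw [ih (s+1) (by omega)]
          split_ifs with h1 h2 h2 <;> omega
        rw [Finset.sum_congr rfl hcongr, indSum]
      rw [hdynf t, hD]
      by_cases h1 : t < j
      · rw [hA0 (t+1) (by omega)]
        rw [if_neg (by omega)]
        simp
      · push_neg at h1
        by_cases h2 : t < j + m
        · rw [if_pos (by omega)]
          have hm1 : min t j = j := by omega
          have hm2 : min t (j+m) = t := by omega
          rw [hm1, hm2]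
          have hge : c * (t - j) + c ≤ A (t+1) := by
            have hlb := hAlb (t+1)
            have e1 : c * (t+1-j) = c * (t-j) + c := by
              have e : t+1-j = (t-j)+1 := by omega
              rw [e, Nat.mul_succ]
            have e2 : c * (t-j) + c ≤ c * m := by
              calc c * (t-j) + c = c * ((t-j)+1) := (Nat.mul_succ c _).symm
                _ ≤ c * m := Nat.mul_le_mul_left c (by omega)
            rw [e1] at hlb
            omega
          set X := c * (t - j) with hX
          omega
        · push_neg at h2
          have hm1 : min t j = j := by omega
          have hm2 : min t (j+m) = j + m := by omega
          rw [hm1, hm2]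
          have e : j + m - j = m := by omega
          rw [e]
          have hub := hAub (t+1)
          rw [if_neg (by omega)]
          set X := c * m with hX
          omega

/-- In the shrinking-chain instance (notation as before: `arr j t` packets
arrive at node `v_j` at time `t`), the last (`n`-th) packet arrives at `v_j`
exactly at time `n/(k−j+1) + j − 1` for each `1 ≤ j ≤ k−ℓ`; in particular, at
the destination `d = v_{k−ℓ}` the equilibrium completion time is
`C = (k−ℓ−1) + n/(ℓ+1)`. -/
theorem shrinking_chain_completion_time (n k ℓ : ℕ) (hn : 0 < n) (hk : 0 < k)
    (hℓ : ℓ < k)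
    (arr : ℕ → ℕ → ℕ)
    (h0 : ∀ t, arr 0 t = if t = 0 then n else 0)
    (hinit : ∀ j, j + 1 ≤ k - ℓ → arr (j + 1) 0 = 0)
    (hdyn : ∀ j, j + 1 ≤ k - ℓ → ∀ t,
      arr (j + 1) (t + 1) =
        min (k - j)
          ((∑ s ∈ Finset.range (t + 1), arr j s) -
            (∑ s ∈ Finset.range t, arr (j + 1) (s + 1))))
    (hdvd : ∀ j, 1 ≤ j → j ≤ k - ℓ → (k - j + 1) ∣ n) :
    (∀ j, 1 ≤ j → j ≤ k - ℓ →
      (∑ s ∈ Finset.range (n / (k - j + 1) + j), arr j s) = n ∧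
        0 < arr j (n / (k - j + 1) + j - 1)) ∧
      (∑ s ∈ Finset.range ((k - ℓ - 1) + n / (ℓ + 1) + 1), arr (k - ℓ) s) = n ∧
        0 < arr (k - ℓ) ((k - ℓ - 1) + n / (ℓ + 1)) := by
  have hkl : 1 ≤ k - ℓ := by omega
  -- pointwise formula for arr j
  have key : ∀ j, 1 ≤ j → j ≤ k - ℓ →
      ∀ t, arr j t = if j ≤ t ∧ t < j + n / (k - j + 1) then (k - j + 1) else 0 := by
    intro j hj
    induction j, hj using Nat.le_induction with
    | base =>
      intro _
      have hdvd1 : k ∣ n := by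
        have := hdvd 1 le_rfl hkl
        simpa [Nat.sub_add_cancel hk] using this
      have hnk : k * (n / k) = n := Nat.mul_div_cancel' hdvd1
      have hA : ∀ T, (∑ s ∈ Finset.range T, arr 0 s) = if T = 0 then 0 else n := by
        intro T
        cases T with
        | zero => simp
        | succ T =>
          have : ∀ s ∈ Finset.range (T+1), arr 0 s = if s = 0 then n else 0 := by
            intro s _; exact h0 s
          rw [Finset.sum_congr rfl this, Finset.sum_ite_eq' (Finset.range (T+1)) 0
            (fun _ => n)]
          simp
      have hq := queue k (n / k) 0 hk (fun T => ∑ s ∈ Finset.range T, arr 0 s)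
        (arr 1)
        (fun T hT => by
          show (∑ s ∈ Finset.range T, arr 0 s) = 0
          rw [hA, if_pos (by omega : T = 0)])
        (fun T => by
          show (∑ s ∈ Finset.range T, arr 0 s) ≤ k * (n / k)
          rw [hA, hnk]
          split_ifs <;> omega)
        (fun T => by
          show min (k * (T - 0)) (k * (n / k)) ≤ ∑ s ∈ Finset.range T, arr 0 s
          rw [hA]
          split_ifs with h
          · subst h; simp
          · rw [hnk]; exact min_le_right _ _)
        (hinit 0 (by omega))
        (fun t => by
          have := hdyn 0 (by omega) t
          simpa using this)
      intro t
      have e : k - 1 + 1 = k := by omega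
      rw [e]
      simpa using hq t
    | succ j hj ihP =>
      intro hle
      have hjle : j ≤ k - ℓ := by omega
      have IH := ihP hjle
      have hjk : j + 1 ≤ k := by omega
      have hc' : 0 < k - j := by omega
      have hdvdc : (k - j + 1) ∣ n := hdvd j (by omega) hjle
      have hdvdc' : (k - j) ∣ n := by
        have := hdvd (j+1) (by omega) hle
        have e : k - (j+1) + 1 = k - j := by omega
        rwa [e] at this
      have hn1 : (k - j + 1) * (n / (k - j + 1)) = n := Nat.mul_div_cancel' hdvdc
      have hn2 : (k - j) * (n / (k - j)) = n := Nat.mul_div_cancel' hdvdc'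
      set c := k - j + 1 with hcdef
      set m := n / (k - j + 1) with hmdef
      clear_value c m
      have hA : ∀ T, (∑ s ∈ Finset.range T, arr j s)
          = c * (min T (j + m) - min T j) := by
        intro T
        have hcongr : ∀ s ∈ Finset.range T,
            arr j s = if j ≤ s ∧ s < j + m then c else 0 := fun s _ => IH s
        rw [Finset.sum_congr rfl hcongr, indSum]
      have hq := queue (k - j) (n / (k - j)) j hc'
        (fun T => ∑ s ∈ Finset.range T, arr j s) (arr (j+1))
        (fun T hT => by
          show (∑ s ∈ Finset.range T, arr j s) = 0
          rw [hA]
          have e : min T (j + m) - min T j = 0 := by omega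
          rw [e, Nat.mul_zero])
        (fun T => by
          show (∑ s ∈ Finset.range T, arr j s) ≤ (k - j) * (n / (k - j))
          rw [hA, hn2]
          calc c * (min T (j + m) - min T j) ≤ c * m :=
                Nat.mul_le_mul_left c (by omega)
            _ = n := hn1)
        (fun T => by
          show min ((k - j) * (T - j)) ((k - j) * (n / (k - j)))
              ≤ ∑ s ∈ Finset.range T, arr j s
          rw [hA]
          by_cases hT1 : T ≤ j
          · have e : (k - j) * (T - j) = 0 := by
              have : T - j = 0 := by omega
              rw [this, Nat.mul_zero]
            rw [e]
            simp
          · by_cases hT2 : T ≤ j + m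
            · have e1 : min T (j + m) = T := by omega
              have e2 : min T j = j := by omega
              rw [e1, e2]
              calc min ((k - j) * (T - j)) ((k - j) * (n / (k - j)))
                    ≤ (k - j) * (T - j) := min_le_left _ _
                _ ≤ c * (T - j) := Nat.mul_le_mul_right _ (by omega)
            · have e1 : min T (j + m) = j + m := by omega
              have e2 : min T j = j := by omega
              rw [e1, e2]
              have e3 : j + m - j = m := by omega
              rw [e3, hn1]
              calc min ((k - j) * (T - j)) ((k - j) * (n / (k - j)))
                    ≤ (k - j) * (n / (k - j)) := min_le_right _ _
                _ = n := hn2)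
        (hinit j hle)
        (fun t => hdyn j hle t)
      intro t
      have e : k - (j + 1) + 1 = k - j := by omega
      rw [e]
      exact hq t
  have key2 : ∀ j, 1 ≤ j → j ≤ k - ℓ →
      (∑ s ∈ Finset.range (n / (k - j + 1) + j), arr j s) = n ∧
        0 < arr j (n / (k - j + 1) + j - 1) := by
    intro j hj hjle
    have hdvdc : (k - j + 1) ∣ n := hdvd j hj hjle
    have hn1 : (k - j + 1) * (n / (k - j + 1)) = n := Nat.mul_div_cancel' hdvdc
    set c := k - j + 1 with hcdef
    set m := n / (k - j + 1) with hmdef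
    clear_value c m
    have hm : 1 ≤ m := by
      rcases Nat.eq_zero_or_pos m with h | h
      · rw [h, Nat.mul_zero] at hn1; omega
      · exact h
    constructor
    · have hcongr : ∀ s ∈ Finset.range (m + j),
          arr j s = if j ≤ s ∧ s < j + m then c else 0 := by
        intro s _
        rw [hcdef, hmdef]
        exact key j hj hjle s
      rw [Finset.sum_congr rfl hcongr, indSum]
      have e1 : min (m + j) (j + m) = j + m := by omega
      have e2 : min (m + j) j = j := by omega
      rw [e1, e2]
      have e3 : j + m - j = m := by omega
      rw [e3, hn1]
    · rw [hmdef, key j hj hjle (n / (k - j + 1) + j - 1),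
        if_pos (by rw [← hmdef]; omega)]
      omega
  refine ⟨key2, ?_⟩
  have e1 : k - (k - ℓ) + 1 = ℓ + 1 := by omega
  obtain ⟨hs, hp⟩ := key2 (k - ℓ) hkl le_rfl
  rw [e1] at hs hp
  generalize hg : n / (ℓ + 1) = M at hs hp ⊢
  have e2 : (k - ℓ - 1) + M + 1 = M + (k - ℓ) := by omega
  have e3 : (k - ℓ - 1) + M = M + (k - ℓ) - 1 := by omega
  rw [e2, e3]
  exact ⟨hs, hp⟩
end

section
/- Let k ≥ 1 and let n packets be distributed over k parallel edges with transit times τ₁ ≤ … ≤ τ_k, where the number of packets on edge j is m_j and the completion time of the last packet on edge j is m_j + τ_j − 1 (packets start at times 0,1,…,m_j−1). If the assignment (m_j) minimizes the makespan max_j (m_j + τ_j − 1) subject to ∑ m_j = n and m_j ≥ 0, then the optimal makespan C* satisfies C* = min { C : ∑_{j: τ_j ≤ C} (C + 1 − τ_j) ≥ n }. -/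
/-- Any `n ≤ ∑ c j` can be distributed respecting capacities `c`. -/
lemma exists_distribution {k : ℕ} (c : Fin k → ℕ) :
    ∀ n, n ≤ ∑ j, c j → ∃ m' : Fin k → ℕ, (∀ j, m' j ≤ c j) ∧ ∑ j, m' j = n := by
  intro n
  induction n with
  | zero => exact fun _ => ⟨0, fun j => Nat.zero_le _, by simp⟩
  | succ n ih =>
    intro h
    obtain ⟨m', hle, hsum⟩ := ih (Nat.le_of_succ_le h)
    have hex : ∃ j, m' j < c j := by
      by_contra hc
      push_neg at hc
      have : ∑ j, c j ≤ ∑ j, m' j := Finset.sum_le_sum fun j _ => hc j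
      omega
    obtain ⟨j, hj⟩ := hex
    refine ⟨fun i => if i = j then m' i + 1 else m' i, ?_, ?_⟩
    · intro i
      by_cases hi : i = j
      · subst hi; simp; omega
      · simp [hi]; exact hle i
    · have heq : (fun i => if i = j then m' i + 1 else m' i)
          = fun i => m' i + (if i = j then 1 else 0) := by
        funext i; split <;> simp
      rw [heq, Finset.sum_add_distrib, hsum, Finset.sum_ite_eq' Finset.univ j fun _ => 1]
      simp

/-- Makespan-optimal scheduling of `n` unit packets on `k` parallel paths of
positive lengths `τ₁ ≤ … ≤ τ_k` with unit capacity: if `m j` packets are sent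
on path `j` (entering at times `0,…,m j − 1`, so the last one arrives at
`m j + τ j − 1`), and the assignment `m` minimizes the makespan
`max_{j : m j > 0} (m j + τ j − 1)` among all assignments of the `n` packets,
then the optimal makespan equals
`min { C : ∑_{j : τ_j ≤ C} (C + 1 − τ_j) ≥ n }`. -/
theorem optimal_makespan_characterization (k n : ℕ) (hk : 1 ≤ k) (hn : 1 ≤ n)
    (τ : Fin k → ℕ) (hτpos : ∀ j, 1 ≤ τ j) (hτ : Monotone τ)
    (m : Fin k → ℕ) (hm : ∑ j, m j = n)
    (hopt : ∀ m' : Fin k → ℕ, ∑ j, m' j = n →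
      (Finset.univ.filter fun j => 0 < m j).sup (fun j => m j + τ j - 1) ≤
        (Finset.univ.filter fun j => 0 < m' j).sup (fun j => m' j + τ j - 1)) :
    (Finset.univ.filter fun j => 0 < m j).sup (fun j => m j + τ j - 1) =
      sInf {C : ℕ | n ≤ ∑ j ∈ Finset.univ.filter fun j => τ j ≤ C, (C + 1 - τ j)} := by
  set Cs := (Finset.univ.filter fun j => 0 < m j).sup (fun j => m j + τ j - 1) with hCs
  have h1 : ∀ j, 0 < m j → m j + τ j - 1 ≤ Cs := fun j hj =>
    Finset.le_sup (f := fun j => m j + τ j - 1) (Finset.mem_filter.mpr ⟨Finset.mem_univ j, hj⟩)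
  -- Cs is in the set
  have hmem : n ≤ ∑ j ∈ Finset.univ.filter fun j => τ j ≤ Cs, (Cs + 1 - τ j) := by
    calc n = ∑ j, m j := hm.symm
    _ = ∑ j ∈ Finset.univ.filter fun j => 0 < m j, m j :=
        (Finset.sum_filter_of_ne fun j _ h => Nat.pos_of_ne_zero h).symm
    _ ≤ ∑ j ∈ Finset.univ.filter fun j => 0 < m j, (Cs + 1 - τ j) := by
        apply Finset.sum_le_sum
        intro j hj
        have hj' := (Finset.mem_filter.mp hj).2
        have := h1 j hj'
        have := hτpos j
        omega
    _ ≤ ∑ j ∈ Finset.univ.filter fun j => τ j ≤ Cs, (Cs + 1 - τ j) := by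
        apply Finset.sum_le_sum_of_subset
        intro j hj
        have hj' := (Finset.mem_filter.mp hj).2
        have := h1 j hj'
        have := hτpos j
        exact Finset.mem_filter.mpr ⟨Finset.mem_univ j, by omega⟩
  apply le_antisymm
  · -- Cs ≤ sInf
    have hne : {C : ℕ | n ≤ ∑ j ∈ Finset.univ.filter fun j => τ j ≤ C, (C + 1 - τ j)}.Nonempty :=
      ⟨Cs, hmem⟩
    apply le_csInf hne
    intro C hC
    simp only [Set.mem_setOf_eq] at hC
    set c : Fin k → ℕ := fun j => if τ j ≤ C then C + 1 - τ j else 0 with hc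
    have hsumc : n ≤ ∑ j, c j := by
      rw [hc]
      rwa [← Finset.sum_filter]
    obtain ⟨m', hle, hsum⟩ := exists_distribution c n hsumc
    refine le_trans (hopt m' hsum) ?_
    apply Finset.sup_le
    intro j hj
    have hj' := (Finset.mem_filter.mp hj).2
    have hcj := hle j
    have hτj := hτpos j
    by_cases h : τ j ≤ C
    · simp only [hc, if_pos h] at hcj; omega
    · simp only [hc, if_neg h] at hcj; omega
  · exact Nat.sInf_le hmem
end
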